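/- arXiv:hep-th/0105177 — 9 statements merged into one kernel-verified Lean document; each statement's English description precedes it below -/
import Mathlib

section
/- In the q-oscillator setup below, the elements y₁ = λ·K⁻¹·a₁⁻·a₂⁺, y₂ = a₂⁻, y₃ = a₁⁺·K satisfy all six cubic q-Serre relations: for every pair i ≠ j in {1,2,3}, yᵢ²yⱼ − (q + q⁻¹)·yᵢ·yⱼ·yᵢ + yⱼ·yᵢ² = 0. -/
lemma comm_ext' {A : Type*} [Ring A] {x y : A} (h : x*y = y*x) (z : A) :
    x*(y*z) = y*(x*z) := by rw [← mul_assoc, h, mul_assoc]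

lemma scomm_ext' {F A : Type*} [Field F] [Ring A] [Algebra F A] {s : F} {x y : A}
    (h : x*y = s•(y*x)) (z : A) : x*(y*z) = s•(y*(x*z)) := by
  rw [← mul_assoc, h, smul_mul_assoc, mul_assoc]

lemma qcomm_ext' {F A : Type*} [Field F] [Ring A] [Algebra F A] {s t : F} {x y : A}
    (h : x*y = s•(y*x) - t•(1:A)) (z : A) : x*(y*z) = s•(y*(x*z)) - t•z := by
  rw [← mul_assoc, h, sub_mul, smul_mul_assoc, mul_assoc, smul_mul_assoc, one_mul]

lemma inv_ext' {A : Type*} [Ring A] {x y : A} (h : x*y = 1) (z : A) :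
    x*(y*z) = z := by rw [← mul_assoc, h, one_mul]

set_option maxHeartbeats 2000000 in
/-- The q-oscillator realization `y₁ = λ·K⁻¹·a₁⁻·a₂⁺`, `y₂ = a₂⁻`, `y₃ = a₁⁺·K`
of the Borel subalgebra of `U_q(sl₃-hat)` satisfies all six cubic q-Serre relations. -/
theorem stmt_4 {F A : Type*} [Field F] [Ring A] [Algebra F A]
    (q lam : F) (hq0 : q ≠ 0) (hq1 : q ^ 2 ≠ 1)
    (a1p a1m a2p a2m K Ki : A)
    (hK : K * Ki = 1) (hK' : Ki * K = 1)
    (hosc1 : q • (a1p * a1m) - q⁻¹ • (a1m * a1p) = (q - q⁻¹)⁻¹ • (1 : A))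
    (hosc2 : q • (a2p * a2m) - q⁻¹ • (a2m * a2p) = (q - q⁻¹)⁻¹ • (1 : A))
    (hc1 : a1p * a2p = a2p * a1p) (hc2 : a1p * a2m = a2m * a1p)
    (hc3 : a1m * a2p = a2p * a1m) (hc4 : a1m * a2m = a2m * a1m)
    (hK2p : K * a2p = q • (a2p * K)) (hK2m : K * a2m = q⁻¹ • (a2m * K))
    (hK1p : K * a1p = a1p * K) (hK1m : K * a1m = a1m * K)
    (y : Fin 3 → A)
    (hy1 : y 0 = lam • (Ki * a1m * a2p))
    (hy2 : y 1 = a2m)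
    (hy3 : y 2 = a1p * K) :
    ∀ i j : Fin 3, i ≠ j →
      (y i) ^ 2 * y j - (q + q⁻¹) • (y i * y j * y i) + y j * (y i) ^ 2 = 0 := by
  have hqq : q - q⁻¹ ≠ 0 := by
    intro h
    rw [sub_eq_zero] at h
    have h2 : q * q = q * q⁻¹ := congrArg (q * ·) h
    exact hq1 (by rw [pow_two, h2, mul_inv_cancel₀ hq0])
  have h1 : q⁻¹ • (a1m * a1p) = q • (a1p*a1m) - (q - q⁻¹)⁻¹ • (1:A) := by
    rw [← hosc1, sub_sub_cancel]
  have r1 : a1m * a1p = (q*q) • (a1p*a1m) - (q*(q - q⁻¹)⁻¹) • (1:A) := by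
    have h2 := congrArg (q • ·) h1
    simpa only [smul_sub, smul_smul, mul_inv_cancel₀ hq0, one_smul] using h2
  have h1' : q⁻¹ • (a2m * a2p) = q • (a2p*a2m) - (q - q⁻¹)⁻¹ • (1:A) := by
    rw [← hosc2, sub_sub_cancel]
  have r2 : a2m * a2p = (q*q) • (a2p*a2m) - (q*(q - q⁻¹)⁻¹) • (1:A) := by
    have h2 := congrArg (q • ·) h1'
    simpa only [smul_sub, smul_smul, mul_inv_cancel₀ hq0, one_smul] using h2
  have k1 : a1p * K = K * a1p := hK1p.symm
  have k2 : a1m * K = K * a1m := hK1m.symm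
  have k3 : a2p * K = q⁻¹ • (K * a2p) := by
    rw [hK2p, smul_smul, inv_mul_cancel₀ hq0, one_smul]
  have k4 : a2m * K = q • (K * a2m) := by
    rw [hK2m, smul_smul, mul_inv_cancel₀ hq0, one_smul]
  have k5 : a1p * Ki = Ki * a1p := by
    have h : Ki * ((K * a1p) * Ki) = a1p * Ki := by
      rw [← mul_assoc, ← mul_assoc, hK', one_mul]
    rw [← h, hK1p]
    simp only [mul_assoc, hK, mul_one]
  have k6 : a1m * Ki = Ki * a1m := by
    have h : Ki * ((K * a1m) * Ki) = a1m * Ki := by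
      rw [← mul_assoc, ← mul_assoc, hK', one_mul]
    rw [← h, hK1m]
    simp only [mul_assoc, hK, mul_one]
  have k7 : a2p * Ki = q • (Ki * a2p) := by
    have h : Ki * ((K * a2p) * Ki) = a2p * Ki := by
      rw [← mul_assoc, ← mul_assoc, hK', one_mul]
    rw [← h, hK2p]
    simp only [smul_mul_assoc, mul_smul_comm, mul_assoc, hK, mul_one]
  have k8 : a2m * Ki = q⁻¹ • (Ki * a2m) := by
    have h : Ki * ((K * a2m) * Ki) = a2m * Ki := by
      rw [← mul_assoc, ← mul_assoc, hK', one_mul]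
    rw [← h, hK2m]
    simp only [smul_mul_assoc, mul_smul_comm, mul_assoc, hK, mul_one]
  have hq2 : (-1 : F) + q ^ 2 ≠ 0 := by
    intro h
    exact hq1 (by linear_combination h)
  have hq3 : -q + q ^ 3 ≠ 0 := by
    have he : -q + q ^ 3 = q * (-1 + q ^ 2) := by ring
    rw [he]
    exact mul_ne_zero hq0 hq2
  have hq4 : q * q - 1 ≠ 0 := by
    intro h
    exact hq1 (by linear_combination h)
  have c1 : a2p * a1p = a1p * a2p := hc1.symm
  have c2 : a2m * a1p = a1p * a2m := hc2.symm
  have c3 : a2p * a1m = a1m * a2p := hc3.symm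
  have c4 : a2m * a1m = a1m * a2m := hc4.symm
  intro i j hij
  fin_cases i <;> fin_cases j <;>
    first
      | exact absurd rfl hij
      | (simp only [Fin.zero_eta, Fin.mk_one, Fin.isValue,
          show (⟨2, by omega⟩ : Fin 3) = 2 from rfl,
          hy1, hy2, hy3, pow_two, smul_mul_assoc, mul_smul_comm, smul_smul,
          mul_assoc, mul_sub, sub_mul, smul_sub, mul_one, one_mul,
          r1, qcomm_ext' r1, r2, qcomm_ext' r2,
          c1, comm_ext' c1, c2, comm_ext' c2, c3, comm_ext' c3, c4, comm_ext' c4,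
          k1, comm_ext' k1, k2, comm_ext' k2, k3, scomm_ext' k3, k4, scomm_ext' k4,
          k5, comm_ext' k5, k6, comm_ext' k6, k7, scomm_ext' k7, k8, scomm_ext' k8,
          hK, inv_ext' hK, hK', inv_ext' hK']
         match_scalars <;> (field_simp; try field_simp) <;> ring)
end

section
/- In the q-oscillator setup below, with y₁ = λ·K⁻¹·a₁⁻·a₂⁺, y₂ = a₂⁻, y₃ = a₁⁺·K, and with the q-commutator notation y_{ij} = yᵢyⱼ − q·yⱼyᵢ, the following additional relations hold: (i) y_{23} = 0; (ii) q·y₃·y_{21} − q⁻¹·y_{21}·y₃ = −λ·(q−q⁻¹)⁻²·1; (iii) q·y_{13}·y₂ − q⁻¹·y₂·y_{13} = −λ·(q−q⁻¹)⁻²·1. -/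
/-- The extra relations satisfied by the q-oscillator realization
`y₁ = λ·K⁻¹·a₁⁻·a₂⁺`, `y₂ = a₂⁻`, `y₃ = a₁⁺·K`, with the q-commutator
`y_{ij} = yᵢyⱼ - q·yⱼyᵢ`:
(i) `y₂₃ = 0`, (ii) `q·y₃·y₂₁ - q⁻¹·y₂₁·y₃ = -λ(q-q⁻¹)⁻²·1`,
(iii) `q·y₁₃·y₂ - q⁻¹·y₂·y₁₃ = -λ(q-q⁻¹)⁻²·1`. -/
theorem stmt_5 {F A : Type*} [Field F] [Ring A] [Algebra F A]
    (q lam : F) (hq0 : q ≠ 0) (hq1 : q ^ 2 ≠ 1)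
    (a1p a1m a2p a2m K Ki : A)
    (hK : K * Ki = 1) (hK' : Ki * K = 1)
    (hosc1 : q • (a1p * a1m) - q⁻¹ • (a1m * a1p) = (q - q⁻¹)⁻¹ • (1 : A))
    (hosc2 : q • (a2p * a2m) - q⁻¹ • (a2m * a2p) = (q - q⁻¹)⁻¹ • (1 : A))
    (hc1 : a1p * a2p = a2p * a1p) (hc2 : a1p * a2m = a2m * a1p)
    (hc3 : a1m * a2p = a2p * a1m) (hc4 : a1m * a2m = a2m * a1m)
    (hK2p : K * a2p = q • (a2p * K)) (hK2m : K * a2m = q⁻¹ • (a2m * K))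
    (hK1p : K * a1p = a1p * K) (hK1m : K * a1m = a1m * K)
    (y1 y2 y3 y21 y13 : A)
    (hy1 : y1 = lam • (Ki * a1m * a2p))
    (hy2 : y2 = a2m)
    (hy3 : y3 = a1p * K)
    (hy21 : y21 = y2 * y1 - q • (y1 * y2))
    (hy13 : y13 = y1 * y3 - q • (y3 * y1)) :
    y2 * y3 - q • (y3 * y2) = 0 ∧
    q • (y3 * y21) - q⁻¹ • (y21 * y3) = (-(lam * ((q - q⁻¹) ^ 2)⁻¹)) • (1 : A) ∧
    q • (y13 * y2) - q⁻¹ • (y2 * y13) = (-(lam * ((q - q⁻¹) ^ 2)⁻¹)) • (1 : A) := by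
  set c : F := (q - q⁻¹)⁻¹ with hc
  -- generic helpers to extend pairwise relations to products with a tail
  have swap : ∀ (u v : A) (s : F), u * v = s • (v * u) → ∀ x : A,
      u * (v * x) = s • (v * (u * x)) := by
    intro u v s h x
    rw [← mul_assoc, h, smul_mul_assoc, mul_assoc]
  have comm : ∀ (u v : A), u * v = v * u → ∀ x : A,
      u * (v * x) = v * (u * x) := by
    intro u v h x
    rw [← mul_assoc, h, mul_assoc]
  -- Ki commutes with a1p, a1m
  have hKi1m : a1m * Ki = Ki * a1m := by
    have h := congrArg (fun x => Ki * x * Ki) hK1m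
    rw [← mul_assoc Ki K a1m, hK', one_mul, ← mul_assoc Ki a1m K,
      mul_assoc (Ki * a1m) K Ki, hK, mul_one] at h
    exact h
  have hKi1p : a1p * Ki = Ki * a1p := by
    have h := congrArg (fun x => Ki * x * Ki) hK1p
    rw [← mul_assoc Ki K a1p, hK', one_mul, ← mul_assoc Ki a1p K,
      mul_assoc (Ki * a1p) K Ki, hK, mul_one] at h
    exact h
  have h2mKi : a2m * Ki = q⁻¹ • (Ki * a2m) := by
    have h := congrArg (fun x => Ki * x * Ki) hK2m
    rw [← mul_assoc Ki K a2m, hK', one_mul, mul_smul_comm, smul_mul_assoc,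
      ← mul_assoc Ki a2m K, mul_assoc (Ki * a2m) K Ki, hK, mul_one] at h
    exact h
  have h2pKi : a2p * Ki = q • (Ki * a2p) := by
    have h := congrArg (fun x => Ki * x * Ki) hK2p
    rw [← mul_assoc Ki K a2p, hK', one_mul, mul_smul_comm, smul_mul_assoc,
      ← mul_assoc Ki a2p K, mul_assoc (Ki * a2p) K Ki, hK, mul_one] at h
    exact h
  -- rearranged oscillator relations (normal ordering: creation before annihilation)
  have hosc1' : a1m * a1p = (q * q) • (a1p * a1m) - (q * c) • (1 : A) := by
    have h := congrArg (fun x : A => q • x) hosc1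
    simp only [smul_sub, smul_smul, mul_inv_cancel₀ hq0, one_smul] at h
    rw [sub_eq_iff_eq_add] at h
    rw [h]
    abel
  have hosc2' : a2m * a2p = (q * q) • (a2p * a2m) - (q * c) • (1 : A) := by
    have h := congrArg (fun x : A => q • x) hosc2
    simp only [smul_sub, smul_smul, mul_inv_cancel₀ hq0, one_smul] at h
    rw [sub_eq_iff_eq_add] at h
    rw [h]
    abel
  -- with-tail versions of all reordering rules
  have L1 : ∀ x : A, a1m * (a1p * x) = (q * q) • (a1p * (a1m * x)) - (q * c) • x := by
    intro x
    rw [← mul_assoc, hosc1', sub_mul, smul_mul_assoc, smul_mul_assoc, one_mul, mul_assoc]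
  have L2 : ∀ x : A, a2m * (a2p * x) = (q * q) • (a2p * (a2m * x)) - (q * c) • x := by
    intro x
    rw [← mul_assoc, hosc2', sub_mul, smul_mul_assoc, smul_mul_assoc, one_mul, mul_assoc]
  have C1 := comm a2p a1p hc1.symm
  have C2 := comm a2m a1p hc2.symm
  have C3 := comm a2p a1m hc3.symm
  have C4 := comm a2m a1m hc4.symm
  have hKi2p : Ki * a2p = q⁻¹ • (a2p * Ki) := by
    rw [h2pKi, smul_smul, inv_mul_cancel₀ hq0, one_smul]
  have hKi2m : Ki * a2m = q • (a2m * Ki) := by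
    rw [h2mKi, smul_smul, mul_inv_cancel₀ hq0, one_smul]
  have C5 := comm Ki a1p hKi1p.symm
  have C6 := comm Ki a1m hKi1m.symm
  have S1 := swap Ki a2p q⁻¹ hKi2p
  have S2 := swap Ki a2m q hKi2m
  have S3 := comm K a1p hK1p
  have S4 := comm K a1m hK1m
  have S5 := swap K a2p q hK2p
  have S6 := swap K a2m q⁻¹ hK2m
  have KK : ∀ x : A, K * (Ki * x) = x := by
    intro x; rw [← mul_assoc, hK, one_mul]
  have KK' : ∀ x : A, Ki * (K * x) = x := by
    intro x; rw [← mul_assoc, hK', one_mul]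
  have hcc : (-(lam * ((q - q⁻¹) ^ 2)⁻¹)) • (1 : A) = (-(lam * c * c)) • (1 : A) := by
    rw [hc, sq, mul_inv]; ring_nf
  rw [hy21, hy13, hy1, hy2, hy3, hcc]
  refine ⟨?_, ?_, ?_⟩ <;>
  · simp only [mul_assoc, smul_mul_assoc, mul_smul_comm, smul_smul, smul_sub, sub_mul,
      mul_sub, sub_smul, smul_add, add_smul, mul_one, one_mul,
      hosc1', hosc2', L1, L2, hc1.symm, hc2.symm, hc3.symm, hc4.symm,
      C1, C2, C3, C4, C5, C6, S1, S2, S3, S4, S5, S6, KK, KK', hK, hK',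
      hKi2p, hKi2m, hKi1p.symm, hKi1m.symm, hK1p, hK1m, hK2p, hK2m]
    match_scalars <;> field_simp <;> ring
end

section
/- In the q-oscillator setup below with Cartan elements H₁, H₂, define h₁ = −H₁ + H₂, h₂ = −H₁ − 2H₂, h₃ = 2H₁ + H₂ and y₁ = λ·K⁻¹·a₁⁻·a₂⁺, y₂ = a₂⁻, y₃ = a₁⁺·K. Then h₁ + h₂ + h₃ = 0, and the Cartan commutation relations [hᵢ, yⱼ] = aᵢⱼ·yⱼ hold for all i, j ∈ {1,2,3}, where aᵢᵢ = 2 and aᵢⱼ = −1 for i ≠ j. -/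
private lemma comm_mul' {A : Type*} [Ring A] (H x y c d : A)
    (hx : H * x - x * H = c) (hy : H * y - y * H = d) :
    H * (x * y) - (x * y) * H = c * y + x * d := by
  rw [← hx, ← hy]; noncomm_ring

private lemma comm_inv' {A : Type*} [Ring A] (K Ki x : A)
    (hK : K * Ki = 1) (hK' : Ki * K = 1) (hx : x * K = K * x) :
    x * Ki - Ki * x = 0 := by
  have : x * Ki = Ki * x := by
    calc x * Ki = (Ki * K) * x * Ki := by rw [hK', one_mul]
      _ = Ki * (K * x) * Ki := by rw [mul_assoc Ki K x]
      _ = Ki * (x * K) * Ki := by rw [hx]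
      _ = Ki * x * (K * Ki) := by simp [mul_assoc]
      _ = Ki * x := by rw [hK, mul_one]
  rw [this, sub_self]

/-- Cartan part of the q-oscillator realization: with
`h₁ = -H₁+H₂`, `h₂ = -H₁-2H₂`, `h₃ = 2H₁+H₂` and
`y₁ = λ·K⁻¹·a₁⁻·a₂⁺`, `y₂ = a₂⁻`, `y₃ = a₁⁺·K`, one has `h₁+h₂+h₃ = 0`
and `[hᵢ, yⱼ] = aᵢⱼ·yⱼ`, where `a` is the Cartan matrix of `A₂⁽¹⁾`. -/
theorem stmt_6 {F A : Type*} [Field F] [CharZero F] [Ring A] [Algebra F A]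
    (q lam : F) (hq0 : q ≠ 0)
    (a1p a1m a2p a2m H1 H2 K Ki : A)
    (hK : K * Ki = 1) (hK' : Ki * K = 1)
    (hH1a1p : H1 * a1p - a1p * H1 = a1p) (hH1a1m : H1 * a1m - a1m * H1 = -a1m)
    (hH2a2p : H2 * a2p - a2p * H2 = a2p) (hH2a2m : H2 * a2m - a2m * H2 = -a2m)
    (hH1a2p : H1 * a2p - a2p * H1 = 0) (hH1a2m : H1 * a2m - a2m * H1 = 0)
    (hH2a1p : H2 * a1p - a1p * H2 = 0) (hH2a1m : H2 * a1m - a1m * H2 = 0)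
    (hH1K : H1 * K - K * H1 = 0) (hH2K : H2 * K - K * H2 = 0)
    (hK2p : K * a2p = q • (a2p * K)) (hK2m : K * a2m = q⁻¹ • (a2m * K))
    (hK1p : K * a1p = a1p * K) (hK1m : K * a1m = a1m * K)
    (hc1 : a1p * a2p = a2p * a1p) (hc2 : a1p * a2m = a2m * a1p)
    (hc3 : a1m * a2p = a2p * a1m) (hc4 : a1m * a2m = a2m * a1m)
    (h y : Fin 3 → A)
    (hh1 : h 0 = -H1 + H2) (hh2 : h 1 = -H1 - (2 : ℕ) • H2)
    (hh3 : h 2 = (2 : ℕ) • H1 + H2)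
    (hy1 : y 0 = lam • (Ki * a1m * a2p)) (hy2 : y 1 = a2m) (hy3 : y 2 = a1p * K) :
    h 0 + h 1 + h 2 = 0 ∧
    ∀ i j : Fin 3, h i * y j - y j * h i = (if i = j then (2 : F) else -1) • y j := by
  -- commutators of H1, H2 with Ki
  have hH1Ki : H1 * Ki - Ki * H1 = 0 :=
    comm_inv' K Ki H1 hK hK' (sub_eq_zero.mp hH1K)
  have hH2Ki : H2 * Ki - Ki * H2 = 0 :=
    comm_inv' K Ki H2 hK hK' (sub_eq_zero.mp hH2K)
  -- commutators with z0 = Ki * a1m * a2p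
  have s1 : H1 * (Ki * a1m) - (Ki * a1m) * H1 = -(Ki * a1m) := by
    have := comm_mul' H1 Ki a1m 0 (-a1m) hH1Ki hH1a1m
    simpa [mul_neg] using this
  have cH1z0 : H1 * (Ki * a1m * a2p) - (Ki * a1m * a2p) * H1 = -(Ki * a1m * a2p) := by
    have := comm_mul' H1 (Ki * a1m) a2p (-(Ki * a1m)) 0 s1 hH1a2p
    simpa [neg_mul] using this
  have t1 : H2 * (Ki * a1m) - (Ki * a1m) * H2 = 0 := by
    have := comm_mul' H2 Ki a1m 0 0 hH2Ki hH2a1m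
    simpa using this
  have cH2z0 : H2 * (Ki * a1m * a2p) - (Ki * a1m * a2p) * H2 = Ki * a1m * a2p := by
    have := comm_mul' H2 (Ki * a1m) a2p 0 a2p t1 hH2a2p
    simpa using this
  -- commutators with the y's
  have C10 : H1 * y 0 - y 0 * H1 = -(y 0) := by
    rw [hy1, mul_smul_comm, smul_mul_assoc, ← smul_sub, cH1z0, smul_neg]
  have C20 : H2 * y 0 - y 0 * H2 = y 0 := by
    rw [hy1, mul_smul_comm, smul_mul_assoc, ← smul_sub, cH2z0]
  have C11 : H1 * y 1 - y 1 * H1 = 0 := by rw [hy2]; exact hH1a2m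
  have C21 : H2 * y 1 - y 1 * H2 = -(y 1) := by rw [hy2]; exact hH2a2m
  have C12 : H1 * y 2 - y 2 * H1 = y 2 := by
    rw [hy3]
    have := comm_mul' H1 a1p K a1p 0 hH1a1p hH1K
    simpa using this
  have C22 : H2 * y 2 - y 2 * H2 = 0 := by
    rw [hy3]
    have := comm_mul' H2 a1p K 0 0 hH2a1p hH2K
    simpa using this
  -- rewrite nsmul
  have Hb : h 1 = -H1 - (H2 + H2) := by rw [hh2, two_smul]
  have Hc : h 2 = (H1 + H1) + H2 := by rw [hh3, two_smul]
  have expand1 : ∀ z : A, (-H1 + H2) * z - z * (-H1 + H2)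
      = -(H1 * z - z * H1) + (H2 * z - z * H2) := by intro z; noncomm_ring
  have expand2 : ∀ z : A, (-H1 - (H2 + H2)) * z - z * (-H1 - (H2 + H2))
      = -(H1 * z - z * H1) - ((H2 * z - z * H2) + (H2 * z - z * H2)) := by
    intro z; noncomm_ring
  have expand3 : ∀ z : A, ((H1 + H1) + H2) * z - z * ((H1 + H1) + H2)
      = ((H1 * z - z * H1) + (H1 * z - z * H1)) + (H2 * z - z * H2) := by
    intro z; noncomm_ring
  have c00 : h 0 * y 0 - y 0 * h 0 = (2 : F) • y 0 := by
    rw [two_smul, hh1, expand1, C10, C20]; abel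
  have c01 : h 0 * y 1 - y 1 * h 0 = (-1 : F) • y 1 := by
    rw [neg_smul, one_smul, hh1, expand1, C11, C21]; abel
  have c02 : h 0 * y 2 - y 2 * h 0 = (-1 : F) • y 2 := by
    rw [neg_smul, one_smul, hh1, expand1, C12, C22]; abel
  have c10 : h 1 * y 0 - y 0 * h 1 = (-1 : F) • y 0 := by
    rw [neg_smul, one_smul, Hb, expand2, C10, C20]; abel
  have c11 : h 1 * y 1 - y 1 * h 1 = (2 : F) • y 1 := by
    rw [two_smul, Hb, expand2, C11, C21]; abel
  have c12 : h 1 * y 2 - y 2 * h 1 = (-1 : F) • y 2 := by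
    rw [neg_smul, one_smul, Hb, expand2, C12, C22]; abel
  have c20 : h 2 * y 0 - y 0 * h 2 = (-1 : F) • y 0 := by
    rw [neg_smul, one_smul, Hc, expand3, C10, C20]; abel
  have c21 : h 2 * y 1 - y 1 * h 2 = (-1 : F) • y 1 := by
    rw [neg_smul, one_smul, Hc, expand3, C11, C21]; abel
  have c22 : h 2 * y 2 - y 2 * h 2 = (2 : F) • y 2 := by
    rw [two_smul, Hc, expand3, C12, C22]; abel
  refine ⟨by rw [hh1, Hb, Hc]; abel, ?_⟩
  intro i j
  fin_cases i <;> fin_cases j <;>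
    simp only [Fin.isValue, if_pos rfl, if_true, if_false, Fin.mk_zero] <;>
    first
      | simpa using c00 | simpa using c01 | simpa using c02
      | simpa using c10 | simpa using c11 | simpa using c12
      | simpa using c20 | simpa using c21 | simpa using c22
end

section
/- Let q ∈ ℂ, q ≠ 0, let Q₁, Q₂, Q₃ : ℂ → ℂ be functions, and let z₀ ∈ ℂ, z₀ ≠ 0, be such that the quantum Wronskian condition holds: det(Qᵢ(t·q^{−2j}))_{i,j∈{1,2,3}} = z₀ for every t ∈ ℂ. Define T(t) = z₀⁻¹·det M(t), where M(t) is the 3×3 matrix whose columns are (Qᵢ(tq³))ᵢ, (Qᵢ(tq⁻¹))ᵢ, (Qᵢ(tq⁻³))ᵢ, and T̄(t) = z₀⁻¹·det N(t), where N(t) has columns (Qᵢ(tq³))ᵢ, (Qᵢ(tq))ᵢ, (Qᵢ(tq⁻³))ᵢ. Then the Baxter T–Q relation holds: for every i ∈ {1,2,3} and every t ∈ ℂ, Qᵢ(tq³) − T(t)·Qᵢ(tq) + T̄(t)·Qᵢ(tq⁻¹) − Qᵢ(tq⁻³) = 0. -/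
/-- The Baxter T–Q relation for `U_q(sl₃-hat)`: if the three Q-functions satisfy
the quantum Wronskian condition `det(Qᵢ(t·q^{-2j}))_{i,j=1,2,3} = z₀` for all `t`,
and `T`, `T̄` are defined as the normalized determinants with columns evaluated
at `(tq³, tq⁻¹, tq⁻³)` and `(tq³, tq, tq⁻³)` respectively, then
`Qᵢ(tq³) - T(t)·Qᵢ(tq) + T̄(t)·Qᵢ(tq⁻¹) - Qᵢ(tq⁻³) = 0`. -/
theorem stmt_7 (q : ℂ) (hq : q ≠ 0) (Q : Fin 3 → ℂ → ℂ) (z0 : ℂ) (hz0 : z0 ≠ 0)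
    (hw : ∀ t : ℂ,
      (Matrix.of fun i j : Fin 3 => Q i (t * q ^ (-2 * (((j : ℕ) : ℤ) + 1)))).det = z0)
    (T Tb : ℂ → ℂ)
    (hT : ∀ t : ℂ, T t = z0⁻¹ *
      (Matrix.of fun i j : Fin 3 => Q i (t * q ^ ((![3, -1, -3] : Fin 3 → ℤ) j))).det)
    (hTb : ∀ t : ℂ, Tb t = z0⁻¹ *
      (Matrix.of fun i j : Fin 3 => Q i (t * q ^ ((![3, 1, -3] : Fin 3 → ℤ) j))).det) :
    ∀ (i : Fin 3) (t : ℂ),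
      Q i (t * q ^ (3 : ℤ)) - T t * Q i (t * q) + Tb t * Q i (t * q⁻¹)
        - Q i (t * q ^ (-3 : ℤ)) = 0 := by
  intro i t
  have hp : ∀ (a b : ℤ), t * q ^ a * q ^ b = t * q ^ (a + b) := fun a b => by
    rw [mul_assoc, ← zpow_add₀ hq]
  set f : Fin 3 → ℤ → ℂ := fun k n => Q k (t * q ^ n) with hf
  have hfa : ∀ (k : Fin 3) (n : ℤ), Q k (t * q ^ n) = f k n := fun k n => rfl
  have h1 := hw (t * q ^ (5:ℤ))
  have h2 := hw (t * q ^ (3:ℤ))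
  have hT' := hT t
  have hTb' := hTb t
  rw [show t * q = t * q ^ (1:ℤ) from by norm_num,
      show t * q⁻¹ = t * q ^ (-1:ℤ) from by rw [zpow_neg_one]]
  simp only [Matrix.det_fin_three, Matrix.of_apply, Matrix.cons_val_zero,
    Matrix.cons_val_one, Matrix.head_cons, Matrix.cons_val_two, Matrix.tail_cons,
    Fin.val_zero, Fin.val_one, Fin.val_two, Nat.cast_zero, Nat.cast_one, Nat.cast_ofNat,
    hp, hfa] at h1 h2 hT' hTb' ⊢
  norm_num at h1 h2 hT' hTb' ⊢
  have hT2 : z0 * T t = z0 * (T t) := rfl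
  apply mul_left_cancel₀ hz0
  rw [mul_zero, mul_sub, mul_add, mul_sub, ← mul_assoc, ← mul_assoc, hT', hTb',
    ← mul_assoc, ← mul_assoc, mul_inv_cancel₀ hz0, one_mul, one_mul]
  fin_cases i <;>
    simp only [Fin.mk_zero, Fin.mk_one, Fin.reduceFinMk, Fin.isValue] <;>
    [linear_combination f 0 (-3) * h1 - f 0 3 * h2;
     linear_combination f 1 (-3) * h1 - f 1 3 * h2;
     linear_combination f 2 (-3) * h1 - f 2 3 * h2]
end

section
/- Let r ∈ ℂ, r ≠ 0, and set q = r². Let Q₁, Q₂, Q₃, Q̄₁, Q̄₂, Q̄₃ : ℂ → ℂ be functions and c₁, c₂, c₃, z₀ ∈ ℂ constants with z₀ ≠ 0 and c₁c₂c₃ = −z₀, satisfying both families of QQ-relations: for every t ∈ ℂ and every cyclic permutation (i,j,k) of (1,2,3), cᵢ·Q̄ᵢ(t) = Qⱼ(tq)·Qₖ(tq⁻¹) − Qₖ(tq)·Qⱼ(tq⁻¹) and −cᵢ·Qᵢ(t) = Q̄ⱼ(tq)·Q̄ₖ(tq⁻¹) − Q̄ₖ(tq)·Q̄ⱼ(tq⁻¹).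 For m ∈ ℤ define T_m(t) = z₀⁻¹·Σᵢ cᵢ·Qᵢ(t·r^{2m+3})·Q̄ᵢ(t·r^{−2m−3}) and T̄_m(t) = z₀⁻¹·Σᵢ cᵢ·Qᵢ(t·r^{−2m−3})·Q̄ᵢ(t·r^{2m+3}). Then the fusion relation holds: for every m ∈ ℤ and every t ∈ ℂ, T_m(t·r²)·T_m(t·r⁻²) = T̄_m(t) + T_{m−1}(t)·T_{m+1}(t). -/
lemma key_fusion (c A B C D E F : Fin 3 → ℂ) (z0 : ℂ) (hz0 : z0 ≠ 0)
    (hc : c 0 * c 1 * c 2 = -z0)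
    (h10 : c 0 * F 0 = A 1 * C 2 - A 2 * C 1)
    (h11 : c 1 * F 1 = A 2 * C 0 - A 0 * C 2)
    (h12 : c 2 * F 2 = A 0 * C 1 - A 1 * C 0)
    (h20 : -(c 0) * E 0 = B 1 * D 2 - B 2 * D 1)
    (h21 : -(c 1) * E 1 = B 2 * D 0 - B 0 * D 2)
    (h22 : -(c 2) * E 2 = B 0 * D 1 - B 1 * D 0) :
    (z0⁻¹ * ∑ i : Fin 3, c i * A i * B i) * (z0⁻¹ * ∑ i : Fin 3, c i * C i * D i)
      = z0⁻¹ * ∑ i : Fin 3, c i * E i * F i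
        + (z0⁻¹ * ∑ i : Fin 3, c i * C i * B i) * (z0⁻¹ * ∑ i : Fin 3, c i * A i * D i) := by
  have hzz : z0 * z0⁻¹ = 1 := mul_inv_cancel₀ hz0
  simp only [Fin.sum_univ_three]
  linear_combination -(z0⁻¹ * z0⁻¹) * ((c 1 * c 2) * (B 1 * D 2 - B 2 * D 1) * h10
    + (c 2 * c 0) * (B 2 * D 0 - B 0 * D 2) * h11
    + (c 0 * c 1) * (B 0 * D 1 - B 1 * D 0) * h12
    + (c 1 * c 2 * c 0 * F 0) * h20
    + (c 2 * c 0 * c 1 * F 1) * h21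
    + (c 0 * c 1 * c 2 * F 2) * h22
    + (c 0 * E 0 * F 0 + c 1 * E 1 * F 1 + c 2 * E 2 * F 2) * hc)
    + z0⁻¹ * (c 0 * E 0 * F 0 + c 1 * E 1 * F 1 + c 2 * E 2 * F 2) * hzz

/-- The fusion relation `T_m(tq)·T_m(tq⁻¹) = T̄_m(t) + T_{m-1}(t)·T_{m+1}(t)` for the
bilinear Q-representations of the transfer matrices, given both families of QQ-relations.
Here `r` plays the role of `q^{1/2}`, `q = r²`. -/
theorem stmt_9 (r : ℂ) (hr : r ≠ 0) (q : ℂ) (hqr : q = r ^ 2)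
    (Q Qb : Fin 3 → ℂ → ℂ) (c : Fin 3 → ℂ) (z0 : ℂ) (hz0 : z0 ≠ 0)
    (hc : c 0 * c 1 * c 2 = -z0)
    (hQQ1 : ∀ (t : ℂ) (i : Fin 3),
      c i * Qb i t = Q (i + 1) (t * q) * Q (i + 2) (t * q⁻¹)
        - Q (i + 2) (t * q) * Q (i + 1) (t * q⁻¹))
    (hQQ2 : ∀ (t : ℂ) (i : Fin 3),
      -(c i) * Q i t = Qb (i + 1) (t * q) * Qb (i + 2) (t * q⁻¹)
        - Qb (i + 2) (t * q) * Qb (i + 1) (t * q⁻¹))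
    (T Tb : ℤ → ℂ → ℂ)
    (hT : ∀ (m : ℤ) (t : ℂ), T m t
      = z0⁻¹ * ∑ i : Fin 3, c i * Q i (t * r ^ (2 * m + 3)) * Qb i (t * r ^ (-(2 * m + 3))))
    (hTb : ∀ (m : ℤ) (t : ℂ), Tb m t
      = z0⁻¹ * ∑ i : Fin 3, c i * Q i (t * r ^ (-(2 * m + 3))) * Qb i (t * r ^ (2 * m + 3))) :
    ∀ (m : ℤ) (t : ℂ),
      T m (t * r ^ (2 : ℤ)) * T m (t * r ^ (-2 : ℤ))
        = Tb m t + T (m - 1) t * T (m + 1) t := by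
  intro m t
  have hq2 : q = r ^ (2 : ℤ) := by rw [hqr]; norm_cast
  have hqi : q⁻¹ = r ^ (-2 : ℤ) := by rw [hq2, ← zpow_neg]
  have harg : ∀ (a b e : ℤ), a + b = e → t * r ^ a * r ^ b = t * r ^ e := by
    intro a b e h
    rw [mul_assoc, ← zpow_add₀ hr, h]
  -- normalized QQ relations at shifted points
  have H1 : ∀ i : Fin 3, c i * Qb i (t * r ^ (2 * m + 3))
      = Q (i + 1) (t * r ^ (2 * m + 5)) * Q (i + 2) (t * r ^ (2 * m + 1))
        - Q (i + 2) (t * r ^ (2 * m + 5)) * Q (i + 1) (t * r ^ (2 * m + 1)) := by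
    intro i
    have h := hQQ1 (t * r ^ (2 * m + 3)) i
    rw [hqi, hq2, harg (2 * m + 3) 2 (2 * m + 5) (by ring),
      harg (2 * m + 3) (-2) (2 * m + 1) (by ring)] at h
    exact h
  have H2 : ∀ i : Fin 3, -(c i) * Q i (t * r ^ (-(2 * m + 3)))
      = Qb (i + 1) (t * r ^ (-(2 * m + 1))) * Qb (i + 2) (t * r ^ (-(2 * m + 5)))
        - Qb (i + 2) (t * r ^ (-(2 * m + 1))) * Qb (i + 1) (t * r ^ (-(2 * m + 5))) := by
    intro i
    have h := hQQ2 (t * r ^ (-(2 * m + 3))) i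
    rw [hqi, hq2, harg (-(2 * m + 3)) 2 (-(2 * m + 1)) (by ring),
      harg (-(2 * m + 3)) (-2) (-(2 * m + 5)) (by ring)] at h
    exact h
  rw [hT, hT, hT, hT, hTb,
    harg 2 (2 * m + 3) (2 * m + 5) (by ring),
    harg 2 (-(2 * m + 3)) (-(2 * m + 1)) (by ring),
    harg (-2) (2 * m + 3) (2 * m + 1) (by ring),
    harg (-2) (-(2 * m + 3)) (-(2 * m + 5)) (by ring),
    show 2 * (m - 1) + 3 = 2 * m + 1 by ring,
    show 2 * (m + 1) + 3 = 2 * m + 5 by ring]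
  exact key_fusion c (fun i => Q i (t * r ^ (2 * m + 5))) (fun i => Qb i (t * r ^ (-(2 * m + 1))))
    (fun i => Q i (t * r ^ (2 * m + 1))) (fun i => Qb i (t * r ^ (-(2 * m + 5))))
    (fun i => Q i (t * r ^ (-(2 * m + 3)))) (fun i => Qb i (t * r ^ (2 * m + 3)))
    z0 hz0 hc
    (by simpa using H1 0) (by simpa using H1 1) (by simpa using H1 2)
    (by simpa using H2 0) (by simpa using H2 1) (by simpa using H2 2)
end

section
/- Let q ∈ ℂ, q ≠ 0, let Q₁, Q₂, Q₃, Q̄₁, Q̄₂, Q̄₃ : ℂ → ℂ be functions and c₁, c₂, c₃, z₀ ∈ ℂ constants such that: (a) the quantum Wronskian condition holds, det(Qᵢ(t·q^{−2j}))_{i,j∈{1,2,3}} = z₀ for every t ∈ ℂ; and (b) the first family of QQ-relations holds, cᵢ·Q̄ᵢ(t) = Qⱼ(tq)·Qₖ(tq⁻¹) − Qₖ(tq)·Qⱼ(tq⁻¹) for every t and every cyclic permutation (i,j,k) of (1,2,3). Then for every t ∈ ℂ: (c₁c₂c₃)·det(Q̄ᵢ(t·q^{2j}))_{i,j∈{1,2,3}}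 = −z₀². -/
private lemma aux_cross_det (a1 a2 a3 b1 b2 b3 c1 c2 c3 d1 d2 d3
    u1 u2 u3 v1 v2 v3 w1 w2 w3 z0 : ℂ)
    (hu1 : u1 = b2 * a3 - b3 * a2) (hu2 : u2 = b3 * a1 - b1 * a3) (hu3 : u3 = b1 * a2 - b2 * a1)
    (hv1 : v1 = c2 * b3 - c3 * b2) (hv2 : v2 = c3 * b1 - c1 * b3) (hv3 : v3 = c1 * b2 - c2 * b1)
    (hw1 : w1 = d2 * c3 - d3 * c2) (hw2 : w2 = d3 * c1 - d1 * c3) (hw3 : w3 = d1 * c2 - d2 * c1)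
    (h1 : c1 * b2 * a3 - c1 * a2 * b3 - b1 * c2 * a3 + b1 * a2 * c3 + a1 * c2 * b3 - a1 * b2 * c3 = z0)
    (h2 : d1 * c2 * b3 - d1 * b2 * c3 - c1 * d2 * b3 + c1 * b2 * d3 + b1 * d2 * c3 - b1 * c2 * d3 = z0) :
    u1 * v2 * w3 - u1 * v3 * w2 - u2 * v1 * w3 + u2 * v3 * w1 + u3 * v1 * w2 - u3 * v2 * w1
      = -(z0 * z0) := by
  subst hu1 hu2 hu3 hv1 hv2 hv3 hw1 hw2 hw3
  nth_rewrite 1 [← h1]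
  nth_rewrite 1 [← h2]
  ring

/-- The companion quantum Wronskian identity for the barred Q-functions:
given the quantum Wronskian condition for the `Qᵢ` and the first family of
QQ-relations, `(c₁c₂c₃)·det(Q̄ᵢ(t·q^{2j}))_{i,j=1,2,3} = -z₀²`. -/
theorem stmt_10 (q : ℂ) (hq : q ≠ 0) (Q Qb : Fin 3 → ℂ → ℂ) (c : Fin 3 → ℂ) (z0 : ℂ)
    (hw : ∀ t : ℂ,
      (Matrix.of fun i j : Fin 3 => Q i (t * q ^ (-2 * (((j : ℕ) : ℤ) + 1)))).det = z0)
    (hQQ : ∀ (t : ℂ) (i : Fin 3),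
      c i * Qb i t = Q (i + 1) (t * q) * Q (i + 2) (t * q⁻¹)
        - Q (i + 2) (t * q) * Q (i + 1) (t * q⁻¹)) :
    ∀ t : ℂ,
      (c 0 * c 1 * c 2) *
        (Matrix.of fun i j : Fin 3 => Qb i (t * q ^ (2 * (((j : ℕ) : ℤ) + 1)))).det
      = -z0 ^ 2 := by
  intro t
  have harg : ∀ k m : ℤ, t * q ^ k * q ^ m = t * q ^ (k + m) := by
    intro k m; rw [mul_assoc, ← zpow_add₀ hq]
  have harg1 : ∀ k : ℤ, t * q ^ k * q = t * q ^ (k + 1) := by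
    intro k; rw [mul_assoc, ← zpow_add_one₀ hq]
  have harg2 : ∀ k : ℤ, t * q ^ k * q⁻¹ = t * q ^ (k - 1) := by
    intro k; rw [mul_assoc, ← zpow_sub_one₀ hq]
  have h1 := hw (t * q ^ (7:ℤ))
  have h2 := hw (t * q ^ (9:ℤ))
  simp only [Matrix.det_fin_three, Matrix.of_apply, harg] at h1 h2 ⊢
  have e0 := fun i => hQQ (t * q ^ (2:ℤ)) i
  have e1 := fun i => hQQ (t * q ^ (4:ℤ)) i
  have e2 := fun i => hQQ (t * q ^ (6:ℤ)) i
  have e00 := e0 0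
  have e01 := e0 1
  have e02 := e0 2
  have e10 := e1 0
  have e11 := e1 1
  have e12 := e1 2
  have e20 := e2 0
  have e21 := e2 1
  have e22 := e2 2
  have f1 : (0 : Fin 3) + 1 = 1 := rfl
  have f2 : (0 : Fin 3) + 2 = 2 := rfl
  have g1 : (1 : Fin 3) + 1 = 2 := rfl
  have g2 : (1 : Fin 3) + 2 = 0 := rfl
  have k1 : (2 : Fin 3) + 1 = 0 := rfl
  have k2 : (2 : Fin 3) + 2 = 1 := rfl
  simp only [harg1, harg2, f1, f2, g1, g2, k1, k2] at e00 e01 e02 e10 e11 e12 e20 e21 e22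
  norm_num at h1 h2 e00 e01 e02 e10 e11 e12 e20 e21 e22 ⊢
  linear_combination aux_cross_det
    (Q 0 (t*q)) (Q 1 (t*q)) (Q 2 (t*q))
    (Q 0 (t*q^(3:ℕ))) (Q 1 (t*q^(3:ℕ))) (Q 2 (t*q^(3:ℕ)))
    (Q 0 (t*q^(5:ℕ))) (Q 1 (t*q^(5:ℕ))) (Q 2 (t*q^(5:ℕ)))
    (Q 0 (t*q^(7:ℕ))) (Q 1 (t*q^(7:ℕ))) (Q 2 (t*q^(7:ℕ)))
    (c 0 * Qb 0 (t*q^(2:ℕ))) (c 1 * Qb 1 (t*q^(2:ℕ))) (c 2 * Qb 2 (t*q^(2:ℕ)))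
    (c 0 * Qb 0 (t*q^(4:ℕ))) (c 1 * Qb 1 (t*q^(4:ℕ))) (c 2 * Qb 2 (t*q^(4:ℕ)))
    (c 0 * Qb 0 (t*q^(6:ℕ))) (c 1 * Qb 1 (t*q^(6:ℕ))) (c 2 * Qb 2 (t*q^(6:ℕ)))
    z0
    e00 e01 e02 e10 e11 e12 e20 e21 e22
    (by linear_combination h1) (by linear_combination h2)
end

section
/- Let a be a positive real number and C ∈ ℂ. Define f : ℂ → ℂ by f(t) = 2π·exp(C·t)·(Γ(1/2 + a·t·e^{iπ/6})·Γ(1/2 + a·t·e^{−iπ/6}))⁻¹, where Γ is the complex Gamma function. Then for every t ∈ ℂ: f(t·e^{iπ/3})·f(t·e^{−iπ/3}) = 2·cosh(π·a·t)·f(t). -/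
/-- The vacuum eigenvalue `f(t) = 2π e^{Ct}/(Γ(1/2 + a t e^{iπ/6})Γ(1/2 + a t e^{-iπ/6}))`
of the fundamental transfer matrix of the W₃ CFT at `c = -2` satisfies
`f(t e^{iπ/3})·f(t e^{-iπ/3}) = 2 cosh(πat)·f(t)` for all `t ∈ ℂ`. -/
theorem stmt_11 (a : ℝ) (ha : 0 < a) (C : ℂ) (f : ℂ → ℂ)
    (hf : ∀ t : ℂ, f t = 2 * (Real.pi : ℂ) * Complex.exp (C * t) *
      (Complex.Gamma (1 / 2 + (a : ℂ) * t * Complex.exp ((Real.pi : ℂ) * Complex.I / 6)) *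
       Complex.Gamma (1 / 2 + (a : ℂ) * t * Complex.exp (-((Real.pi : ℂ) * Complex.I) / 6)))⁻¹) :
    ∀ t : ℂ,
      f (t * Complex.exp ((Real.pi : ℂ) * Complex.I / 3)) *
        f (t * Complex.exp (-((Real.pi : ℂ) * Complex.I) / 3))
      = 2 * Complex.cosh ((Real.pi : ℂ) * (a : ℂ) * t) * f t := by
  intro t
  have hπ : (Real.pi : ℂ) ≠ 0 := Complex.ofReal_ne_zero.mpr Real.pi_ne_zero
  set P : ℂ := (Real.pi : ℂ) with hP
  -- Exponential identities
  have hI : Complex.exp (P * Complex.I / 3) * Complex.exp (P * Complex.I / 6)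
      = Complex.I := by
    rw [← Complex.exp_add, show P * Complex.I / 3 + P * Complex.I / 6 = P / 2 * Complex.I by ring,
      Complex.exp_mul_I, Complex.cos_pi_div_two, Complex.sin_pi_div_two]
    ring
  have hnI : Complex.exp (-(P * Complex.I) / 3) * Complex.exp (-(P * Complex.I) / 6)
      = -Complex.I := by
    rw [← Complex.exp_add,
      show -(P * Complex.I) / 3 + -(P * Complex.I) / 6 = -(P / 2) * Complex.I by ring,
      Complex.exp_mul_I, Complex.cos_neg, Complex.sin_neg,
      Complex.cos_pi_div_two, Complex.sin_pi_div_two]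
    ring
  have h36 : Complex.exp (P * Complex.I / 3) * Complex.exp (-(P * Complex.I) / 6)
      = Complex.exp (P * Complex.I / 6) := by
    rw [← Complex.exp_add]
    congr 1
    ring
  have h36' : Complex.exp (-(P * Complex.I) / 3) * Complex.exp (P * Complex.I / 6)
      = Complex.exp (-(P * Complex.I) / 6) := by
    rw [← Complex.exp_add]
    congr 1
    ring
  have hsum : Complex.exp (P * Complex.I / 3) + Complex.exp (-(P * Complex.I) / 3) = 1 := by
    rw [show P * Complex.I / 3 = (P / 3) * Complex.I by ring,
      show -(P * Complex.I) / 3 = -(P / 3) * Complex.I by ring,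
      Complex.exp_mul_I, Complex.exp_mul_I, Complex.cos_neg, Complex.sin_neg,
      show P / 3 = ((Real.pi / 3 : ℝ) : ℂ) by push_cast [hP]; ring,
      ← Complex.ofReal_cos, Real.cos_pi_div_three]
    push_cast
    ring
  -- abbreviations for the four Gamma arguments
  set G1 : ℂ := Complex.Gamma (1 / 2 + (a : ℂ) * t * Complex.I) with hG1
  set G2 : ℂ := Complex.Gamma (1 / 2 + (a : ℂ) * t * Complex.exp (P * Complex.I / 6)) with hG2
  set G3 : ℂ := Complex.Gamma (1 / 2 + (a : ℂ) * t * Complex.exp (-(P * Complex.I) / 6)) with hG3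
  set G4 : ℂ := Complex.Gamma (1 / 2 + (a : ℂ) * t * -Complex.I) with hG4
  -- reflection formula
  have hrefl : G1 * G4 = P / Complex.cosh (P * (a : ℂ) * t) := by
    rw [hG1, hG4, show (1 / 2 : ℂ) + (a : ℂ) * t * -Complex.I
        = 1 - (1 / 2 + (a : ℂ) * t * Complex.I) by ring,
      Complex.Gamma_mul_Gamma_one_sub]
    congr 1
    rw [show P * (1 / 2 + (a : ℂ) * t * Complex.I) = P / 2 + (P * (a : ℂ) * t) * Complex.I by ring,
      Complex.sin_add, Complex.sin_pi_div_two, Complex.cos_pi_div_two, Complex.cos_mul_I]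
    ring
  have hrefl' : (G1 * G4)⁻¹ = Complex.cosh (P * (a : ℂ) * t) / P := by
    rw [hrefl, inv_div]
  -- rewrite the Gamma arguments appearing after unfolding f
  have hA1 : (1 / 2 : ℂ) + (a : ℂ) * (t * Complex.exp (P * Complex.I / 3))
      * Complex.exp (P * Complex.I / 6) = 1 / 2 + (a : ℂ) * t * Complex.I := by
    rw [show (a : ℂ) * (t * Complex.exp (P * Complex.I / 3)) * Complex.exp (P * Complex.I / 6)
      = (a : ℂ) * t * (Complex.exp (P * Complex.I / 3) * Complex.exp (P * Complex.I / 6)) by ring,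
      hI]
  have hA2 : (1 / 2 : ℂ) + (a : ℂ) * (t * Complex.exp (P * Complex.I / 3))
      * Complex.exp (-(P * Complex.I) / 6)
      = 1 / 2 + (a : ℂ) * t * Complex.exp (P * Complex.I / 6) := by
    rw [show (a : ℂ) * (t * Complex.exp (P * Complex.I / 3)) * Complex.exp (-(P * Complex.I) / 6)
      = (a : ℂ) * t * (Complex.exp (P * Complex.I / 3) * Complex.exp (-(P * Complex.I) / 6))
      by ring, h36]
  have hA3 : (1 / 2 : ℂ) + (a : ℂ) * (t * Complex.exp (-(P * Complex.I) / 3))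
      * Complex.exp (P * Complex.I / 6)
      = 1 / 2 + (a : ℂ) * t * Complex.exp (-(P * Complex.I) / 6) := by
    rw [show (a : ℂ) * (t * Complex.exp (-(P * Complex.I) / 3)) * Complex.exp (P * Complex.I / 6)
      = (a : ℂ) * t * (Complex.exp (-(P * Complex.I) / 3) * Complex.exp (P * Complex.I / 6))
      by ring, h36']
  have hA4 : (1 / 2 : ℂ) + (a : ℂ) * (t * Complex.exp (-(P * Complex.I) / 3))
      * Complex.exp (-(P * Complex.I) / 6) = 1 / 2 + (a : ℂ) * t * -Complex.I := by
    rw [show (a : ℂ) * (t * Complex.exp (-(P * Complex.I) / 3)) * Complex.exp (-(P * Complex.I) / 6)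
      = (a : ℂ) * t * (Complex.exp (-(P * Complex.I) / 3) * Complex.exp (-(P * Complex.I) / 6))
      by ring, hnI]
  -- product of the exponential prefactors
  have hE : Complex.exp (C * (t * Complex.exp (P * Complex.I / 3)))
      * Complex.exp (C * (t * Complex.exp (-(P * Complex.I) / 3))) = Complex.exp (C * t) := by
    rw [← Complex.exp_add]
    congr 1
    rw [show C * (t * Complex.exp (P * Complex.I / 3))
        + C * (t * Complex.exp (-(P * Complex.I) / 3))
        = C * t * (Complex.exp (P * Complex.I / 3) + Complex.exp (-(P * Complex.I) / 3)) by ring,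
      hsum, mul_one]
  rw [hf, hf, hf, hA1, hA2, hA3, hA4, ← hG1, ← hG2, ← hG3, ← hG4]
  calc 2 * P * Complex.exp (C * (t * Complex.exp (P * Complex.I / 3))) * (G1 * G2)⁻¹
        * (2 * P * Complex.exp (C * (t * Complex.exp (-(P * Complex.I) / 3))) * (G3 * G4)⁻¹)
      = 2 * P * (2 * P) * (Complex.exp (C * (t * Complex.exp (P * Complex.I / 3)))
        * Complex.exp (C * (t * Complex.exp (-(P * Complex.I) / 3))))
        * ((G1 * G4)⁻¹ * (G2 * G3)⁻¹) := by
        rw [mul_inv, mul_inv, mul_inv]; ring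
    _ = 2 * P * (2 * P) * Complex.exp (C * t)
        * (Complex.cosh (P * (a : ℂ) * t) / P * (G2 * G3)⁻¹) := by rw [hE, hrefl']
    _ = 2 * Complex.cosh (P * (a : ℂ) * t)
        * (2 * P * Complex.exp (C * t) * (G2 * G3)⁻¹) := by
        rw [div_eq_mul_inv]
        linear_combination (4 * P * Complex.exp (C * t) * Complex.cosh (P * (a : ℂ) * t)
          * (G2 * G3)⁻¹) * mul_inv_cancel₀ hπ
end

section
/- Let a be a positive real number, n ∈ ℕ, and define p : ℂ → ℂ by p(t) = ((1+2n − 2at·e^{iπ/6})·(1+2n − 2at·e^{−iπ/6})) / ((1+2n + 2at·e^{iπ/6})·(1+2n + 2at·e^{−iπ/6})). Let t ∈ ℂ be such that the four numbers 1+2n + 2at·e^{iπ/6}, 1+2n + 2at·e^{−iπ/6}, 1+2n + 2iat and 1+2n − 2iat are all nonzero. Then p(t·e^{iπ/3})·p(t·e^{−iπ/3}) = p(t). -/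
/-- Multiplicative invariance of each rational factor
`p(t) = ((1+2n - 2at e^{iπ/6})(1+2n - 2at e^{-iπ/6}))/((1+2n + 2at e^{iπ/6})(1+2n + 2at e^{-iπ/6}))`
under `t ↦ (t e^{iπ/3}, t e^{-iπ/3})`: `p(te^{iπ/3})·p(te^{-iπ/3}) = p(t)`,
provided the relevant four factors are nonzero. -/
theorem stmt_13 (a : ℝ) (ha : 0 < a) (n : ℕ) (p : ℂ → ℂ)
    (hp : ∀ t : ℂ, p t =
      ((1 + 2 * (n : ℂ) - 2 * (a : ℂ) * t * Complex.exp ((Real.pi : ℂ) * Complex.I / 6)) *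
       (1 + 2 * (n : ℂ) - 2 * (a : ℂ) * t * Complex.exp (-((Real.pi : ℂ) * Complex.I) / 6))) /
      ((1 + 2 * (n : ℂ) + 2 * (a : ℂ) * t * Complex.exp ((Real.pi : ℂ) * Complex.I / 6)) *
       (1 + 2 * (n : ℂ) + 2 * (a : ℂ) * t * Complex.exp (-((Real.pi : ℂ) * Complex.I) / 6))))
    (t : ℂ)
    (h1 : 1 + 2 * (n : ℂ) + 2 * (a : ℂ) * t * Complex.exp ((Real.pi : ℂ) * Complex.I / 6) ≠ 0)
    (h2 : 1 + 2 * (n : ℂ) + 2 * (a : ℂ) * t * Complex.exp (-((Real.pi : ℂ) * Complex.I) / 6) ≠ 0)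
    (h3 : 1 + 2 * (n : ℂ) + 2 * Complex.I * (a : ℂ) * t ≠ 0)
    (h4 : 1 + 2 * (n : ℂ) - 2 * Complex.I * (a : ℂ) * t ≠ 0) :
    p (t * Complex.exp ((Real.pi : ℂ) * Complex.I / 3)) *
      p (t * Complex.exp (-((Real.pi : ℂ) * Complex.I) / 3)) = p t := by
  set E := Complex.exp ((Real.pi : ℂ) * Complex.I / 6) with hE
  set F := Complex.exp (-((Real.pi : ℂ) * Complex.I) / 6) with hF
  set G := Complex.exp ((Real.pi : ℂ) * Complex.I / 3) with hG
  set H := Complex.exp (-((Real.pi : ℂ) * Complex.I) / 3) with hH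
  have hI : Complex.exp ((Real.pi : ℂ) * Complex.I / 2) = Complex.I := by
    have h : ((Real.pi : ℂ) * Complex.I / 2) = (↑(Real.pi / 2) : ℂ) * Complex.I := by
      push_cast; ring
    rw [h, Complex.exp_mul_I]
    push_cast [← Complex.ofReal_cos, ← Complex.ofReal_sin]
    simp [Real.cos_pi_div_two, Real.sin_pi_div_two]
  have hnI : Complex.exp (-((Real.pi : ℂ) * Complex.I) / 2) = -Complex.I := by
    have h : (-((Real.pi : ℂ) * Complex.I) / 2) = -((Real.pi : ℂ) * Complex.I / 2) := by ring
    rw [h, Complex.exp_neg, hI, Complex.inv_I]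
  have e1 : G * E = Complex.I := by
    rw [hG, hE, ← Complex.exp_add,
      show (Real.pi : ℂ) * Complex.I / 3 + (Real.pi : ℂ) * Complex.I / 6
        = (Real.pi : ℂ) * Complex.I / 2 by ring, hI]
  have e2 : G * F = E := by
    rw [hG, hF, hE, ← Complex.exp_add]
    ring_nf
  have e3 : H * E = F := by
    rw [hH, hE, hF, ← Complex.exp_add]
    ring_nf
  have e4 : H * F = -Complex.I := by
    rw [hH, hF, ← Complex.exp_add,
      show -((Real.pi : ℂ) * Complex.I) / 3 + -((Real.pi : ℂ) * Complex.I) / 6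
        = -((Real.pi : ℂ) * Complex.I) / 2 by ring, hnI]
  have r1 : 2 * (a : ℂ) * (t * G) * E = 2 * Complex.I * (a : ℂ) * t := by
    linear_combination (2 * (a : ℂ) * t) * e1
  have r2 : 2 * (a : ℂ) * (t * G) * F = 2 * (a : ℂ) * t * E := by
    linear_combination (2 * (a : ℂ) * t) * e2
  have r3 : 2 * (a : ℂ) * (t * H) * E = 2 * (a : ℂ) * t * F := by
    linear_combination (2 * (a : ℂ) * t) * e3
  have r4 : 2 * (a : ℂ) * (t * H) * F = -(2 * Complex.I * (a : ℂ) * t) := by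
    linear_combination (2 * (a : ℂ) * t) * e4
  rw [hp, hp, hp, r1, r2, r3, r4]
  have h4' : 1 + 2 * (n : ℂ) + -(2 * Complex.I * (a : ℂ) * t) ≠ 0 := by
    simpa [sub_eq_add_neg] using h4
  field_simp
  ring
end

section
/- Let g > 0 be real, let ν₁, ν₂, ν₃, E, y₀ ∈ ℂ satisfy exp(−3y₀) = −g³·E, and set σ₂ = ν₁ν₂ + ν₁ν₃ + ν₂ν₃ and σ₃ = ν₁ν₂ν₃. Suppose Ψ : ℂ → ℂ is holomorphic and satisfies, for all y ∈ ℂ, the third-order equation Ψ'''(y) − σ₂·Ψ'(y) + (i·σ₃ + exp((3/g)·y) − E·exp(3y))·Ψ(y) = 0. Define Φ(y) = Ψ(g·y + y₀). Then Φ is holomorphic and satisfies, for all y ∈ ℂ, the equation of the same form with dual parameters: Φ'''(y) − g²σ₂·Φ'(y) + (i·g³σ₃ + exp(3g·y) − E'·exp(3y))·Φ(y) = 0, where E' = −g³·exp(3y₀/g). -/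
/-- The duality transformation of the third-order differential equation:
if `Ψ` is entire and satisfies
`Ψ''' - σ₂Ψ' + (iσ₃ + e^{3y/g} - E e^{3y})Ψ = 0` with `e^{-3y₀} = -g³E`, then
`Φ(y) = Ψ(gy + y₀)` is entire and satisfies the equation of the same form with dual
parameters `g²σ₂`, `g³σ₃`, `E' = -g³ e^{3y₀/g}`. -/
theorem stmt_14 (g : ℝ) (hg : 0 < g) (ν₁ ν₂ ν₃ E y₀ : ℂ)
    (hy₀ : Complex.exp (-3 * y₀) = -(g : ℂ) ^ 3 * E)
    (σ₂ σ₃ : ℂ) (hσ₂ : σ₂ = ν₁ * ν₂ + ν₁ * ν₃ + ν₂ * ν₃) (hσ₃ : σ₃ = ν₁ * ν₂ * ν₃)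
    (Ψ : ℂ → ℂ) (hΨ : Differentiable ℂ Ψ)
    (hode : ∀ y : ℂ,
      iteratedDeriv 3 Ψ y - σ₂ * deriv Ψ y
        + (Complex.I * σ₃ + Complex.exp ((3 / (g : ℂ)) * y) - E * Complex.exp (3 * y)) * Ψ y
        = 0)
    (Φ : ℂ → ℂ) (hΦ : ∀ y : ℂ, Φ y = Ψ ((g : ℂ) * y + y₀))
    (E' : ℂ) (hE' : E' = -(g : ℂ) ^ 3 * Complex.exp (3 * y₀ / (g : ℂ))) :
    Differentiable ℂ Φ ∧
    ∀ y : ℂ,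
      iteratedDeriv 3 Φ y - (g : ℂ) ^ 2 * σ₂ * deriv Φ y
        + (Complex.I * ((g : ℂ) ^ 3 * σ₃) + Complex.exp (3 * (g : ℂ) * y)
            - E' * Complex.exp (3 * y)) * Φ y
        = 0 := by
  set c : ℂ := (g : ℂ) with hc
  have hc0 : c ≠ 0 := by
    simp only [hc, ne_eq, Complex.ofReal_eq_zero]
    exact hg.ne'
  have hΦfun : Φ = fun y => (fun z => Ψ (z + y₀)) (c * y) := by
    funext y; simp [hΦ y]
  have hΨ₁ : Differentiable ℂ (fun z => Ψ (z + y₀)) :=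
    hΨ.comp (differentiable_id.add_const y₀)
  have hdiff : Differentiable ℂ Φ := by
    rw [hΦfun]
    exact hΨ₁.comp (differentiable_id.const_mul c)
  have hcomp : ∀ n : ℕ, iteratedDeriv n Φ
      = fun y => c ^ n * iteratedDeriv n Ψ (c * y + y₀) := by
    intro n
    rw [hΦfun, iteratedDeriv_comp_const_mul (hΨ₁.contDiff) c, iteratedDeriv_comp_add_const]
  refine ⟨hdiff, fun y => ?_⟩
  have h3 : iteratedDeriv 3 Φ y = c ^ 3 * iteratedDeriv 3 Ψ (c * y + y₀) :=
    congrFun (hcomp 3) y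
  have h1 : deriv Φ y = c * deriv Ψ (c * y + y₀) := by
    have := congrFun (hcomp 1) y
    simpa [iteratedDeriv_one] using this
  have hode' := hode (c * y + y₀)
  have e1 : Complex.exp ((3 / c) * (c * y + y₀))
      = Complex.exp (3 * y) * Complex.exp (3 * y₀ / c) := by
    rw [← Complex.exp_add]
    congr 1
    field_simp
  have e2 : Complex.exp (3 * (c * y + y₀))
      = Complex.exp (3 * c * y) * Complex.exp (3 * y₀) := by
    rw [← Complex.exp_add]; ring_nf
  have hinv : Complex.exp (-3 * y₀) * Complex.exp (3 * y₀) = 1 := by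
    rw [← Complex.exp_add]; ring_nf; exact Complex.exp_zero
  rw [hy₀] at hinv
  rw [e1, e2] at hode'
  rw [h3, h1, hE', hΦ y]
  linear_combination c ^ 3 * hode' - Ψ (c * y + y₀) * Complex.exp (3 * c * y) * hinv
end
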